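/- arXiv:2108.07694 — 3 statements merged into one kernel-verified Lean document; each statement's English description precedes it below -/
import Mathlib

section
/- Parametrization independence of the integral element: let 𝓛 : Mat_{N×(n+1)}(ℝ) → ℝ be a differentiable density of degree 1, let A ∈ Mat_{N×(n+1)}(ℝ), let U be a real (n+1)×n matrix, and let M be an invertible real (n+1)×(n+1) matrix with det M > 0. Then v_l(A·M, M⁻¹·U) = v_l(A, U) for every l = 1,…,N. -/
attribute [local instance] Matrix.normedAddCommGroup Matrix.normedSpace

noncomputable def signedMinor {n : ℕ} (U : Matrix (Fin (n + 1)) (Fin n) ℝ)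
    (j : Fin (n + 1)) : ℝ :=
  (-1 : ℝ) ^ (j : ℕ) * (U.submatrix j.succAbove id).det

noncomputable def integralElement {n N : ℕ}
    (𝓛 : Matrix (Fin N) (Fin (n + 1)) ℝ → ℝ)
    (A : Matrix (Fin N) (Fin (n + 1)) ℝ)
    (U : Matrix (Fin (n + 1)) (Fin n) ℝ) (l : Fin N) : ℝ :=
  ∑ j : Fin (n + 1), fderiv ℝ 𝓛 A (Matrix.single l j 1) * signedMinor U j

/-- The square matrix whose 0-th column is `x` and remaining columns are `V`. -/
noncomputable def consMat {n : ℕ} (x : Fin (n + 1) → ℝ)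
    (V : Matrix (Fin (n + 1)) (Fin n) ℝ) : Matrix (Fin (n + 1)) (Fin (n + 1)) ℝ :=
  Matrix.of fun i => Fin.cons (x i) (V i)

lemma det_consMat {n : ℕ} (x : Fin (n + 1) → ℝ) (V : Matrix (Fin (n + 1)) (Fin n) ℝ) :
    (consMat x V).det = ∑ i, x i * signedMinor V i := by
  rw [Matrix.det_succ_column_zero]
  refine Finset.sum_congr rfl fun i _ => ?_
  have h1 : (consMat x V) i 0 = x i := rfl
  have h2 : (consMat x V).submatrix i.succAbove Fin.succ = V.submatrix i.succAbove id := by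
    ext a b; rfl
  rw [h1, h2, signedMinor]; ring

lemma mul_consMat {n : ℕ} (M : Matrix (Fin (n + 1)) (Fin (n + 1)) ℝ)
    (x : Fin (n + 1) → ℝ) (V : Matrix (Fin (n + 1)) (Fin n) ℝ) :
    M * consMat x V = consMat (M.mulVec x) (M * V) := by
  ext i k
  refine Fin.cases ?_ (fun b => ?_) k
  · simp [consMat, Matrix.mul_apply, Matrix.mulVec, dotProduct]
  · simp [consMat, Matrix.mul_apply]

lemma signedMinor_inv_mul {n : ℕ} (M : Matrix (Fin (n + 1)) (Fin (n + 1)) ℝ)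
    (hMunit : IsUnit M.det) (U : Matrix (Fin (n + 1)) (Fin n) ℝ) (j : Fin (n + 1)) :
    M.det * signedMinor (M⁻¹ * U) j = ∑ i, M i j * signedMinor U i := by
  set x : Fin (n + 1) → ℝ := fun t => if t = j then (1 : ℝ) else 0 with hxdef
  have key : (M * consMat x (M⁻¹ * U)).det = (consMat (M.mulVec x) U).det := by
    rw [mul_consMat, Matrix.mul_nonsing_inv_cancel_left _ _ hMunit]
  rw [Matrix.det_mul, det_consMat, det_consMat] at key
  have hx : ∑ i, x i * signedMinor (M⁻¹ * U) i = signedMinor (M⁻¹ * U) j := by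
    rw [Finset.sum_eq_single j] <;> simp +contextual [hxdef]
  have hy : ∀ i, M.mulVec x i = M i j := by
    intro i
    simp only [Matrix.mulVec, dotProduct, hxdef, mul_ite, mul_one, mul_zero]
    rw [Finset.sum_eq_single j] <;> simp +contextual
  rw [hx] at key
  rw [key]
  exact Finset.sum_congr rfl fun i _ => by rw [hy]

lemma stdBasis_mul {n N : ℕ} (l : Fin N) (j : Fin (n + 1))
    (B : Matrix (Fin (n + 1)) (Fin (n + 1)) ℝ) :
    Matrix.single l j (1 : ℝ) * B
      = ∑ k, B j k • Matrix.single l k (1 : ℝ) := by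
  ext a b
  simp only [Matrix.mul_apply, Matrix.single, Matrix.sum_apply,
    Matrix.smul_apply, Matrix.of_apply, smul_eq_mul, mul_ite, mul_one, mul_zero,
    ite_and, ite_mul, one_mul, zero_mul]
  by_cases h : l = a
  · simp [h, Finset.sum_ite_eq, Finset.sum_ite_eq']
  · simp [h]

/-- Parametrization independence of the integral element: if `𝓛` is a
differentiable density of degree 1, `A ∈ Mat_{N×(n+1)}(ℝ)`, `U` a real `(n+1)×n`
matrix, and `M` an invertible `(n+1)×(n+1)` matrix with `det M > 0`, then
`v_l(A·M, M⁻¹·U) = v_l(A, U)` for every `l`. -/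
theorem integralElement_parametrization_independent
    (n N : ℕ)
    (𝓛 : Matrix (Fin N) (Fin (n + 1)) ℝ → ℝ)
    (hdiff : Differentiable ℝ 𝓛)
    (hdens : ∀ (A : Matrix (Fin N) (Fin (n + 1)) ℝ)
      (M : Matrix (Fin (n + 1)) (Fin (n + 1)) ℝ),
      0 < M.det → 𝓛 (A * M) = M.det * 𝓛 A)
    (A : Matrix (Fin N) (Fin (n + 1)) ℝ)
    (U : Matrix (Fin (n + 1)) (Fin n) ℝ)
    (M : Matrix (Fin (n + 1)) (Fin (n + 1)) ℝ)
    (hMunit : IsUnit M.det) (hMdet : 0 < M.det) (l : Fin N) :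
    integralElement 𝓛 (A * M) (M⁻¹ * U) l = integralElement 𝓛 A U l := by
  let Lmap : Matrix (Fin N) (Fin (n + 1)) ℝ →ₗ[ℝ] Matrix (Fin N) (Fin (n + 1)) ℝ :=
    { toFun := fun X => X * M
      map_add' := fun X Y => Matrix.add_mul X Y M
      map_smul' := fun c X => Matrix.smul_mul c X M }
  let Lclm := LinearMap.toContinuousLinearMap Lmap
  have hchain : ∀ H, fderiv ℝ 𝓛 (A * M) (H * M) = M.det * fderiv ℝ 𝓛 A H := by
    intro H
    have h1 : HasFDerivAt (fun X => 𝓛 (X * M))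
        ((fderiv ℝ 𝓛 (A * M)).comp Lclm) A :=
      ((hdiff (A * M)).hasFDerivAt).comp A (Lclm.hasFDerivAt)
    have h2 : HasFDerivAt (fun X => 𝓛 (X * M)) (M.det • fderiv ℝ 𝓛 A) A := by
      have heq : (fun X : Matrix (Fin N) (Fin (n + 1)) ℝ => 𝓛 (X * M))
          = fun X => M.det * 𝓛 X := by
        funext X; exact hdens X M hMdet
      rw [heq]
      exact ((hdiff A).hasFDerivAt).const_mul M.det
    have huniq := h1.unique h2
    calc fderiv ℝ 𝓛 (A * M) (H * M)
        = ((fderiv ℝ 𝓛 (A * M)).comp Lclm) H := rfl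
      _ = (M.det • fderiv ℝ 𝓛 A) H := by rw [huniq]
      _ = M.det * fderiv ℝ 𝓛 A H := rfl
  set D : Fin (n + 1) → ℝ := fun k => fderiv ℝ 𝓛 A (Matrix.single l k 1) with hD
  set w : Fin (n + 1) → ℝ := fun i => signedMinor U i with hw
  have hterm : ∀ j : Fin (n + 1),
      fderiv ℝ 𝓛 (A * M) (Matrix.single l j 1)
      = M.det * ∑ k, M⁻¹ j k * D k := by
    intro j
    have he : Matrix.single l j (1 : ℝ)
        = (Matrix.single l j (1 : ℝ) * M⁻¹) * M := by
      rw [Matrix.mul_assoc, Matrix.nonsing_inv_mul _ hMunit, Matrix.mul_one]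
    rw [he, hchain, stdBasis_mul, map_sum]
    congr 1
    exact Finset.sum_congr rfl fun k _ => by rw [map_smul]; rfl
  have h1 : ∀ j : Fin (n + 1),
      fderiv ℝ 𝓛 (A * M) (Matrix.single l j 1) * signedMinor (M⁻¹ * U) j
      = ∑ k, ∑ i, (M i j * M⁻¹ j k) * (D k * w i) := by
    intro j
    rw [hterm j]
    calc (M.det * ∑ k, M⁻¹ j k * D k) * signedMinor (M⁻¹ * U) j
        = (∑ k, M⁻¹ j k * D k) * (M.det * signedMinor (M⁻¹ * U) j) := by ring
      _ = (∑ k, M⁻¹ j k * D k) * (∑ i, M i j * signedMinor U i) := by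
          rw [signedMinor_inv_mul M hMunit U j]
      _ = ∑ k, ∑ i, (M i j * M⁻¹ j k) * (D k * w i) := by
          rw [Finset.sum_mul]
          refine Finset.sum_congr rfl fun k _ => ?_
          rw [Finset.mul_sum]
          exact Finset.sum_congr rfl fun i _ => by simp only [hw]; ring
  unfold integralElement
  calc ∑ j, fderiv ℝ 𝓛 (A * M) (Matrix.single l j 1) * signedMinor (M⁻¹ * U) j
      = ∑ j, ∑ k, ∑ i, (M i j * M⁻¹ j k) * (D k * w i) :=
        Finset.sum_congr rfl fun j _ => h1 j
    _ = ∑ k, ∑ j, ∑ i, (M i j * M⁻¹ j k) * (D k * w i) := Finset.sum_comm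
    _ = ∑ k, ∑ i, ∑ j, (M i j * M⁻¹ j k) * (D k * w i) :=
        Finset.sum_congr rfl fun k _ => Finset.sum_comm
    _ = ∑ k, ∑ i, ((M * M⁻¹) i k) * (D k * w i) := by
        refine Finset.sum_congr rfl fun k _ => Finset.sum_congr rfl fun i _ => ?_
        rw [← Finset.sum_mul, ← Matrix.mul_apply]
    _ = ∑ k, D k * w k := by
        refine Finset.sum_congr rfl fun k _ => ?_
        rw [Matrix.mul_nonsing_inv _ hMunit]
        rw [Finset.sum_eq_single k] <;> simp +contextual [Matrix.one_apply]
end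

section
/- The generalized Hamilton–Jacobi constraints ℋ^k vanish identically on integral elements: let 𝓛 : Mat_{N×(n+1)}(ℝ) → ℝ be a differentiable density of degree 1, let A ∈ Mat_{N×(n+1)}(ℝ), and let U be a real (n+1)×n matrix. Then for every k ∈ {1,…,n}, Σ_{l=1}^N v_l(A,U) · (A·U)_{lk} = 0. -/
attribute [local instance] Matrix.normedAddCommGroup Matrix.normedSpace

open Matrix Polynomial in
lemma hasDerivAt_det_one_add_smul {m : ℕ} (X : Matrix (Fin m) (Fin m) ℝ) :
    HasDerivAt (fun t : ℝ => (1 + t • X).det) X.trace 0 := by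
  set P : ℝ[X] := (Matrix.det (1 + (Polynomial.X : ℝ[X]) • X.map Polynomial.C)).divX.divX
  have h1 : (fun t : ℝ => (1 + t • X).det)
      = fun t : ℝ => 1 + X.trace * t + P.eval t * t ^ 2 :=
    funext fun t => Matrix.det_one_add_smul t X
  rw [h1]
  have h2 : HasDerivAt (fun t : ℝ => 1 + X.trace * t + P.eval t * t ^ 2)
      (X.trace + (P.derivative.eval 0 * 0 ^ 2 + P.eval 0 * (2 * 0 ^ 1))) 0 := by
    have hA : HasDerivAt (fun t : ℝ => 1 + X.trace * t) X.trace 0 := by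
      simpa using ((hasDerivAt_id (0:ℝ)).const_mul X.trace).const_add 1
    exact hA.add ((P.hasDerivAt 0).mul (hasDerivAt_pow 2 0))
  simpa using h2

lemma euler_identity {n N : ℕ}
    (𝓛 : Matrix (Fin N) (Fin (n + 1)) ℝ → ℝ)
    (hdiff : Differentiable ℝ 𝓛)
    (hdens : ∀ (A : Matrix (Fin N) (Fin (n + 1)) ℝ)
      (M : Matrix (Fin (n + 1)) (Fin (n + 1)) ℝ),
      0 < M.det → 𝓛 (A * M) = M.det * 𝓛 A)
    (A : Matrix (Fin N) (Fin (n + 1)) ℝ)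
    (X : Matrix (Fin (n + 1)) (Fin (n + 1)) ℝ) :
    fderiv ℝ 𝓛 A (A * X) = X.trace * 𝓛 A := by
  -- inner curve
  have hcurve : HasDerivAt (fun t : ℝ => A * (1 + t • X)) (A * X) 0 := by
    have : (fun t : ℝ => A * (1 + t • X)) = fun t : ℝ => A + t • (A * X) := by
      funext t
      rw [Matrix.mul_add, Matrix.mul_one, Matrix.mul_smul]
    rw [this]
    have h := ((hasDerivAt_id (0:ℝ)).smul_const (A * X)).const_add A
    rw [one_smul] at h
    exact h
  have hf : HasDerivAt (fun t : ℝ => 𝓛 (A * (1 + t • X))) (fderiv ℝ 𝓛 A (A * X)) 0 := by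
    have h := ((hdiff (A * (1 + (0:ℝ) • X))).hasFDerivAt).comp_hasDerivAt 0 hcurve
    simp only [zero_smul, add_zero, Matrix.mul_one] at h
    exact h
  have hg : HasDerivAt (fun t : ℝ => (1 + t • X).det * 𝓛 A) (X.trace * 𝓛 A) 0 :=
    (hasDerivAt_det_one_add_smul X).mul_const (𝓛 A)
  -- the two functions agree near 0
  have hcont : Continuous fun t : ℝ => (1 + t • X).det :=
    Continuous.matrix_det (by continuity)
  have hpos : ∀ᶠ t in nhds (0:ℝ), 0 < (1 + t • X).det := by
    have h0 : (0:ℝ) < (1 + (0:ℝ) • X).det := by simp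
    exact continuousAt_const.eventually_lt hcont.continuousAt h0
  have feq : (fun t : ℝ => 𝓛 (A * (1 + t • X)))
      =ᶠ[nhds (0:ℝ)] fun t : ℝ => (1 + t • X).det * 𝓛 A :=
    hpos.mono fun t ht => hdens _ _ ht
  have hf' : HasDerivAt (fun t : ℝ => 𝓛 (A * (1 + t • X))) (X.trace * 𝓛 A) 0 :=
    hg.congr_of_eventuallyEq feq
  exact hf.unique hf'

/-- The generalized Hamilton–Jacobi constraints `ℋ^k` vanish
identically on integral elements: if `𝓛` is a differentiable density of degree 1,
then for every `A`, every `(n+1)×n` matrix `U`, and every `k`,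
`Σ_l v_l(A,U) · (A·U)_{lk} = 0`. -/
theorem HJ_constraints_vanish_on_integral_elements
    (n N : ℕ)
    (𝓛 : Matrix (Fin N) (Fin (n + 1)) ℝ → ℝ)
    (hdiff : Differentiable ℝ 𝓛)
    (hdens : ∀ (A : Matrix (Fin N) (Fin (n + 1)) ℝ)
      (M : Matrix (Fin (n + 1)) (Fin (n + 1)) ℝ),
      0 < M.det → 𝓛 (A * M) = M.det * 𝓛 A)
    (A : Matrix (Fin N) (Fin (n + 1)) ℝ)
    (U : Matrix (Fin (n + 1)) (Fin n) ℝ) (k : Fin n) :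
    ∑ l : Fin N, integralElement 𝓛 A U l * (A * U) l k = 0 := by
  set X : Matrix (Fin (n + 1)) (Fin (n + 1)) ℝ :=
    Matrix.of fun s j => U s k * signedMinor U j with hX
  have htr : X.trace = 0 := by
    set M : Matrix (Fin (n + 1)) (Fin (n + 1)) ℝ :=
      Matrix.of fun i j => Fin.cases (U i k) (fun j' => U i j') j with hM
    have hdet0 : M.det = 0 := by
      apply Matrix.det_zero_of_column_eq (i := 0) (j := k.succ)
      · exact (Fin.succ_ne_zero k).symm
      · intro r; simp [hM]
    have hexp := Matrix.det_succ_column_zero M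
    rw [hdet0] at hexp
    have : X.trace = ∑ i : Fin (n + 1),
        (-1) ^ (i : ℕ) * M i 0 * (M.submatrix i.succAbove Fin.succ).det := by
      rw [Matrix.trace]
      refine Finset.sum_congr rfl fun i _ => ?_
      have hsub : M.submatrix i.succAbove Fin.succ = U.submatrix i.succAbove id := by
        ext a b; simp [hM]
      rw [hsub]
      simp only [Matrix.diag_apply, hX, Matrix.of_apply, signedMinor, hsub, hM,
        Fin.cases_zero]
      ring
    rw [this, ← hexp]
  have heuler := euler_identity 𝓛 hdiff hdens A X
  rw [htr, zero_mul] at heuler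
  rw [← heuler]
  -- expand fderiv linearly
  have hexp : fderiv ℝ 𝓛 A (A * X)
      = ∑ l : Fin N, ∑ j : Fin (n + 1),
        (A * X) l j * fderiv ℝ 𝓛 A (Matrix.single l j 1) := by
    conv_lhs => rw [Matrix.matrix_eq_sum_single (A * X)]
    rw [map_sum]
    refine Finset.sum_congr rfl fun l _ => ?_
    rw [map_sum]
    refine Finset.sum_congr rfl fun j _ => ?_
    have : Matrix.single l j ((A * X) l j)
        = ((A * X) l j) • Matrix.single l j (1:ℝ) := by
      rw [Matrix.smul_single, smul_eq_mul, mul_one]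
    rw [this, map_smul, smul_eq_mul]
  rw [hexp]
  refine Finset.sum_congr rfl fun l _ => ?_
  rw [integralElement, Finset.sum_mul]
  refine Finset.sum_congr rfl fun j _ => ?_
  have hentry : (A * X) l j = (A * U) l k * signedMinor U j := by
    simp only [Matrix.mul_apply, hX, Matrix.of_apply, Finset.sum_mul]
    exact Finset.sum_congr rfl fun s _ => by ring
  rw [hentry]
  ring
end

section
/- Conformal invariance of the Dirichlet energy: let U ⊆ ℂ be open, let f : U → ℂ be holomorphic and injective on U, and let φ : ℂ → ℝ be continuously differentiable on f(U). Then ∫_U ‖∇(φ∘f)(z)‖² dz = ∫_{f(U)} ‖∇φ(w)‖² dw, where ∇ denotes the total (Fréchet) derivative with respect to the two real coordinates, ‖·‖ is the Euclidean norm of the gradient, the integrals are Lebesgue (lower) integrals with respect to planar Lebesgue measure, and the identity holds in [0,∞]. -/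
open MeasureTheory

lemma fderiv_real_eq_mul {f : ℂ → ℂ} {z : ℂ} (h : DifferentiableAt ℂ f z) :
    fderiv ℝ f z = ContinuousLinearMap.mul ℝ ℂ (deriv f z) := by
  rw [h.fderiv_restrictScalars ℝ]
  ext x
  simp only [ContinuousLinearMap.coe_restrictScalars', ContinuousLinearMap.mul_apply']
  have : fderiv ℂ f z x = x • fderiv ℂ f z 1 := by
    rw [← (fderiv ℂ f z).map_smul, smul_eq_mul, mul_one]
  rw [this, fderiv_apply_one_eq_deriv, smul_eq_mul, mul_comm]

lemma det_mul_complex (c : ℂ) :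
    (ContinuousLinearMap.mul ℝ ℂ c).det = Complex.normSq c := by
  have : (ContinuousLinearMap.mul ℝ ℂ c).det = LinearMap.det (Algebra.lmul ℝ ℂ c) := rfl
  rw [this, ← Algebra.norm_apply, Algebra.norm_complex_apply]

lemma norm_comp_mul (L : ℂ →L[ℝ] ℝ) (c : ℂ) :
    ‖L.comp (ContinuousLinearMap.mul ℝ ℂ c)‖ = ‖c‖ * ‖L‖ := by
  rcases eq_or_ne c 0 with rfl | hc
  · have : ContinuousLinearMap.mul ℝ ℂ (0:ℂ) = 0 := by ext x; simp
    simp [this]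
  · set u : Circle := ⟨c / ‖c‖, by
      show _ ∈ Metric.sphere (0:ℂ) 1
      rw [mem_sphere_zero_iff_norm]
      simp [norm_div, hc, norm_ne_zero_iff.mpr hc]⟩
    have hmul : ContinuousLinearMap.mul ℝ ℂ c
        = ‖c‖ • (rotation u).toLinearIsometry.toContinuousLinearMap := by
      ext x
      simp only [ContinuousLinearMap.mul_apply', ContinuousLinearMap.coe_smul', Pi.smul_apply,
        LinearIsometry.coe_toContinuousLinearMap, LinearIsometryEquiv.coe_toLinearIsometry,
        rotation_apply]
      show c * x = ‖c‖ • ((c / ‖c‖ : ℂ) * x)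
      rw [Complex.real_smul]
      have h0 : (‖c‖:ℂ) ≠ 0 := by simpa using hc
      field_simp
    rw [hmul, ContinuousLinearMap.comp_smul]
    have hns := norm_smul ‖c‖ (L.comp (rotation u).toLinearIsometry.toContinuousLinearMap)
    rw [hns, show L.comp (rotation u).toLinearIsometry.toContinuousLinearMap = L.comp ((rotation u).toContinuousLinearEquiv : ℂ →L[ℝ] ℂ) from rfl, ContinuousLinearMap.opNorm_comp_linearIsometryEquiv, norm_norm]

open Filter in
lemma image_mem_nhds_aux {U : Set ℂ} (hU : IsOpen U) {f : ℂ → ℂ}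
    (hf : ∀ z ∈ U, DifferentiableAt ℂ f z) (hinj : Set.InjOn f U)
    {z : ℂ} (hz : z ∈ U) : f '' U ∈ nhds (f z) := by
  have han : AnalyticAt ℂ f z :=
    DifferentiableOn.analyticAt (fun w hw => (hf w hw).differentiableWithinAt)
      (hU.mem_nhds hz)
  rcases han.eventually_constant_or_nhds_le_map_nhds with h | h
  · exfalso
    have hU' : ∀ᶠ w in nhds z, w ∈ U := hU.mem_nhds hz
    have h2 : ∀ᶠ w in nhdsWithin z {z}ᶜ, (f w = f z ∧ w ∈ U) ∧ w ∈ ({z}ᶜ : Set ℂ) :=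
      ((h.and hU').filter_mono nhdsWithin_le_nhds).and self_mem_nhdsWithin
    obtain ⟨w, ⟨hw1, hw2⟩, hw3⟩ := h2.exists
    exact hw3 (hinj hw2 hz hw1)
  · exact h (Filter.image_mem_map (hU.mem_nhds hz))

/-- Conformal invariance of the Dirichlet energy: for `U ⊆ ℂ` open,
`f` holomorphic and injective on `U`, and `φ : ℂ → ℝ` continuously differentiable
on `f(U)`, one has `∫_U ‖∇(φ∘f)‖² = ∫_{f(U)} ‖∇φ‖²` (Lebesgue lower integrals,
identity in `[0,∞]`). -/
theorem dirichlet_energy_conformal_invariance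
    (U : Set ℂ) (hU : IsOpen U)
    (f : ℂ → ℂ) (hf : ∀ z ∈ U, DifferentiableAt ℂ f z)
    (hinj : Set.InjOn f U)
    (φ : ℂ → ℝ) (hφ : ContDiffOn ℝ 1 φ (f '' U)) :
    ∫⁻ z in U, ENNReal.ofReal (‖fderiv ℝ (φ ∘ f) z‖ ^ 2)
      = ∫⁻ w in f '' U, ENNReal.ofReal (‖fderiv ℝ φ w‖ ^ 2) := by
  have hφdiff : ∀ z ∈ U, DifferentiableAt ℝ φ (f z) := fun z hz =>
    (hφ.differentiableOn one_ne_zero).differentiableAt (image_mem_nhds_aux hU hf hinj hz)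
  rw [lintegral_image_eq_lintegral_abs_det_fderiv_mul volume hU.measurableSet
      (fun z hz => ((hf z hz).restrictScalars ℝ).hasFDerivAt.hasFDerivWithinAt) hinj]
  apply setLIntegral_congr_fun hU.measurableSet
  intro z hz
  beta_reduce
  have hchain : fderiv ℝ (φ ∘ f) z = (fderiv ℝ φ (f z)).comp (fderiv ℝ f z) :=
    fderiv_comp z (hφdiff z hz) ((hf z hz).restrictScalars ℝ)
  rw [hchain, fderiv_real_eq_mul (hf z hz), norm_comp_mul, det_mul_complex]
  rw [← ENNReal.ofReal_mul (by positivity)]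
  congr 1
  have habs : |Complex.normSq (deriv f z)| = ‖deriv f z‖ ^ 2 := by
    rw [abs_of_nonneg (Complex.normSq_nonneg _), Complex.normSq_eq_norm_sq]
  rw [habs, mul_pow]
end
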